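/- Suppose differentiable functions σ_Π, σ_Φ : ℝ → ℝ with σ_Π > 0 satisfy the coupled system σ_Π'(t) = L · σ_Π(t)^{2−2/L} · σ_Φ(t) · a(t) and σ_Φ'(t) = σ_Π(t) · a(t) for a common continuous function a(t) and integer L ≥ 1. Then σ_Φ(t)² − σ_Π(t)^{2/L} is constant in t. -/

import Mathlib

/-- If `σΠ' = L σΠ^{2-2/L} σΦ a` and `σΦ' = σΠ a` with `σΠ > 0`, then
`σΦ² − σΠ^{2/L}` is constant in `t`.  Here `sPi = σΠ`, `sPhi = σΦ`. -/
theorem stmt3 (sPi sPhi a : ℝ → ℝ) (hPi : Differentiable ℝ sPi)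
    (hPhi : Differentiable ℝ sPhi) (ha : Continuous a)
    (hpos : ∀ t, 0 < sPi t) (L : ℕ) (hL : 1 ≤ L)
    (hode1 : ∀ t, deriv sPi t =
      (L : ℝ) * sPi t ^ ((2 : ℝ) - 2 / L) * sPhi t * a t)
    (hode2 : ∀ t, deriv sPhi t = sPi t * a t) :
    ∀ s t : ℝ, (sPhi t) ^ 2 - sPi t ^ ((2 : ℝ) / L) =
      (sPhi s) ^ 2 - sPi s ^ ((2 : ℝ) / L) := by
  have hL0 : (L : ℝ) ≠ 0 := Nat.cast_ne_zero.mpr (by omega)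
  have key : ∀ t, HasDerivAt (fun t => (sPhi t) ^ 2 - sPi t ^ ((2 : ℝ) / L)) 0 t := by
    intro t
    have hPhi' : HasDerivAt sPhi (sPi t * a t) t := by
      have := (hPhi t).hasDerivAt
      rwa [hode2 t] at this
    have hPi' : HasDerivAt sPi ((L : ℝ) * sPi t ^ ((2 : ℝ) - 2 / L) * sPhi t * a t) t := by
      have := (hPi t).hasDerivAt
      rwa [hode1 t] at this
    have h1 : HasDerivAt (fun t => (sPhi t) ^ 2)
        ((2 : ℕ) * sPhi t ^ 1 * (sPi t * a t)) t := hPhi'.pow 2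
    have h2 : HasDerivAt (fun t => sPi t ^ ((2 : ℝ) / L))
        (((2 : ℝ) / L) * sPi t ^ ((2 : ℝ) / L - 1) *
          ((L : ℝ) * sPi t ^ ((2 : ℝ) - 2 / L) * sPhi t * a t)) t := by
      have := hPi'.rpow_const (p := (2 : ℝ) / L) (Or.inl (hpos t).ne')
      convert this using 1
      ring
    have := h1.sub h2
    convert this using 1
    case e'_4 => rfl
    case e'_5 => rfl
    case e'_8 => rfl
    have hmul : sPi t ^ ((2 : ℝ) / L - 1) * sPi t ^ ((2 : ℝ) - 2 / L) = sPi t := by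
      rw [← Real.rpow_add (hpos t)]
      norm_num
    have h2L : ((2 : ℝ) / L) * L = 2 := by field_simp
    have e : 2 / (L : ℝ) * sPi t ^ ((2 : ℝ) / L - 1) *
        ((L : ℝ) * sPi t ^ ((2 : ℝ) - 2 / L) * sPhi t * a t)
        = 2 * sPi t * sPhi t * a t := by
      rw [show 2 / (L : ℝ) * sPi t ^ ((2 : ℝ) / L - 1) *
          ((L : ℝ) * sPi t ^ ((2 : ℝ) - 2 / L) * sPhi t * a t)
          = (2 / (L : ℝ) * L) * (sPi t ^ ((2 : ℝ) / L - 1) * sPi t ^ ((2 : ℝ) - 2 / L)) *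
            sPhi t * a t from by ring, hmul, h2L]
    rw [e]
    push_cast
    ring
  intro s t
  have hsub : ∀ u v : ℝ, (fun t => (sPhi t) ^ 2 - sPi t ^ ((2 : ℝ) / L)) u
      = (fun t => (sPhi t) ^ 2 - sPi t ^ ((2 : ℝ) / L)) v := by
    intro u v
    exact is_const_of_deriv_eq_zero (fun x => (key x).differentiableAt)
      (fun x => (key x).deriv) u v
  exact hsub t s
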